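/- arXiv:1909.07114 — 2 statements merged into one kernel-verified Lean document; each statement's English description precedes it below -/
import Mathlib

section
/- Fix e ≥ 3 and let λ be a partition of 5e with empty e-core of one of the forms ⟨i_{3,2}⟩ (1 ≤ i ≤ e−1), ⟨i_{2^2}, j⟩ (1 ≤ i ≤ j−1, j ≤ e−1), or ⟨j, i_{2^2}⟩ (0 ≤ j ≤ i−2, i ≤ e−1). Then in the abacus display of λ with 5e beads, runner i is the unique index k ∈ {1,…,e−1} whose reduced k-signature contains at least two − signs; moreover, in the display of λ with 5e+1 beads the reduced 1-signature contains at most one − sign. -/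
/-- A partition, recorded by its (1-indexed) sequence of parts: weakly decreasing from
index `1` on, eventually zero, with the unused index `0` set to `0`. -/
structure Ptn where
  parts : ℕ → ℕ
  zero_at_zero : parts 0 = 0
  antitone : ∀ ⦃i j : ℕ⦄, 1 ≤ i → i ≤ j → parts j ≤ parts i
  eventually_zero : ∃ N : ℕ, ∀ i : ℕ, N ≤ i → parts i = 0

namespace Ptn

/-- The number of (nonzero) parts. -/
noncomputable def numParts (l : Ptn) : ℕ :=
  sInf {N : ℕ | ∀ i : ℕ, N < i → l.parts i = 0}

/-- The size `|λ|`, i.e. the integer that `λ` is a partition of. -/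
noncomputable def size (l : Ptn) : ℕ :=
  ∑ i ∈ Finset.Icc 1 l.numParts, l.parts i

/-- The β-set `B_r(λ) = {λ_i + r - i : 1 ≤ i ≤ r}` of `λ` with `r` beads. -/
def betaSet (l : Ptn) (r : ℕ) : Finset ℕ :=
  (Finset.Icc 1 r).image fun i => l.parts i + r - i

end Ptn

/-- The β-set of the `e`-core: push all beads on each runner as high as possible. -/
def coreBeta (e : ℕ) (B : Finset ℕ) : Finset ℕ :=
  (Finset.range e).biUnion fun k =>
    (Finset.range ((B.filter fun x => x % e = k).card)).image fun j => j * e + k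

/-- The `e`-weight of the abacus display `B`. -/
def eWeight (e : ℕ) (B : Finset ℕ) : ℕ :=
  ((∑ b ∈ B, b) - ∑ b ∈ coreBeta e B, b) / e

/-- Two partitions have the same `e`-core. -/
def SameCore (e : ℕ) (l m : Ptn) : Prop :=
  ∀ r : ℕ, l.numParts ≤ r → m.numParts ≤ r →
    coreBeta e (l.betaSet r) = coreBeta e (m.betaSet r)

/-- `λ` is `e`-regular: it has no `e` equal nonzero parts. -/
def Regular (e : ℕ) (l : Ptn) : Prop :=
  ∀ i : ℕ, 1 ≤ i → l.parts i ≠ 0 → l.parts (i + e - 1) < l.parts i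

/-- The sign (if any) contributed by row `x` to the `k`-signature of the display `B`:
`some false` is a `−` (bead on runner `k`, none on runner `k-1`),
`some true` is a `+` (bead on runner `k-1`, none on runner `k`). -/
def signAt (e k : ℕ) (B : Finset ℕ) (x : ℕ) : Option Bool :=
  if x * e + k ∈ B ∧ x * e + (k - 1) ∉ B then some false
  else if x * e + (k - 1) ∈ B ∧ x * e + k ∉ B then some true
  else none

/-- The `k`-signature of the display `B`, reading rows from top to bottom. -/
def signature (e k : ℕ) (B : Finset ℕ) : List Bool :=
  (List.range (B.sup id / e + 1)).filterMap (signAt e k B)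

/-- Successively delete adjacent `−+` pairs until none remain. -/
def reduceSig : List Bool → List Bool
  | [] => []
  | s :: rest =>
    match reduceSig rest with
    | [] => [s]
    | t :: rest' => if s = false ∧ t = true then rest' else s :: t :: rest'

/-- The number of `−` signs in the reduced `k`-signature of `B`,
i.e. the number of normal beads on runner `k`. -/
def normalCount (e k : ℕ) (B : Finset ℕ) : ℕ :=
  (reduceSig (signature e k B)).count false

/-- The abacus display with `e` runners whose beads on runner `k` sit in the rows `rows k`. -/
def runnerBeta (e : ℕ) (rows : ℕ → Finset ℕ) : Finset ℕ :=
  (Finset.range e).biUnion fun k => (rows k).image fun y => y * e + k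

/-- Rows of a 5-bead runner carrying the empty partition. -/
def rowsEmpty : Finset ℕ := {0, 1, 2, 3, 4}
/-- Rows of a 5-bead runner carrying the partition `(3,2)`. -/
def rows32 : Finset ℕ := {0, 1, 2, 5, 7}
/-- Rows of a 5-bead runner carrying the partition `(2,2)`. -/
def rows22 : Finset ℕ := {0, 1, 2, 5, 6}
/-- Rows of a 5-bead runner carrying the partition `(1)`. -/
def rows1 : Finset ℕ := {0, 1, 2, 3, 5}
/-- Rows of a 5-bead runner carrying the partition `(5)`. -/
def rows5 : Finset ℕ := {0, 1, 2, 3, 9}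
/-- Rows of a 5-bead runner carrying the partition `(4)`. -/
def rows4 : Finset ℕ := {0, 1, 2, 3, 8}

/-- The β-set (with `5e` beads) of `⟨i_{3,2}⟩`. -/
def shape32 (e i : ℕ) : Finset ℕ :=
  runnerBeta e fun k => if k = i then rows32 else rowsEmpty

/-- The β-set (with `5e` beads) of `⟨i_{2²}, j⟩`. -/
def shapeA (e i j : ℕ) : Finset ℕ :=
  runnerBeta e fun k => if k = i then rows22 else if k = j then rows1 else rowsEmpty

/-- The β-set (with `5e` beads) of `⟨j, i_{2²}⟩`. -/
def shapeB (e j i : ℕ) : Finset ℕ :=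
  runnerBeta e fun k => if k = j then rows1 else if k = i then rows22 else rowsEmpty

/-- The β-set (with `5e` beads) of `⟨i_5⟩`. -/
def shape5 (e i : ℕ) : Finset ℕ :=
  runnerBeta e fun k => if k = i then rows5 else rowsEmpty

/-- The β-set (with `5e` beads) of `⟨i_4, i+1⟩`. -/
def shape41 (e i : ℕ) : Finset ℕ :=
  runnerBeta e fun k => if k = i then rows4 else if k = i + 1 then rows1 else rowsEmpty

/-- The β-set (with `5e` beads) of `⟨0, i_4⟩`. -/
def shape04 (e i : ℕ) : Finset ℕ :=
  runnerBeta e fun k => if k = 0 then rows1 else if k = i then rows4 else rowsEmpty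

/-- The `e`-weight of the bead at position `a` of the display `B`. -/
def beadWt (e : ℕ) (B : Finset ℕ) (a : ℕ) : ℕ :=
  ((Finset.Icc 1 (a / e)).filter fun j => a - j * e ∉ B).card

/-- The induced `e`-sequence of the display `B`, as a multiset:
each bead of positive weight `w` at position `a` contributes `a, a-e, …, a-(w-1)e`. -/
def indSeq (e : ℕ) (B : Finset ℕ) : Multiset ℕ :=
  B.val.bind fun a => (Multiset.range (beadWt e B a)).map fun u => a - u * e

/-- The product order `λ ≤_P μ`. -/
def ProdLE (e : ℕ) (l m : Ptn) : Prop :=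
  l.size = m.size ∧ SameCore e l m ∧
  (∀ r : ℕ, l.numParts ≤ r → m.numParts ≤ r →
    eWeight e (l.betaSet r) = eWeight e (m.betaSet r)) ∧
  ∃ N₀ : ℕ, ∀ N : ℕ, N₀ ≤ N → l.numParts ≤ N → m.numParts ≤ N →
    List.Forall₂ (· ≤ ·) (Multiset.sort (indSeq e (l.betaSet N)) (· ≤ ·))
      (Multiset.sort (indSeq e (m.betaSet N)) (· ≤ ·))

/-- The dominance order `λ ⊴ μ`. -/
def Dom (l m : Ptn) : Prop :=
  ∀ t : ℕ, ∑ i ∈ Finset.Icc 1 t, l.parts i ≤ ∑ i ∈ Finset.Icc 1 t, m.parts i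

/-- `λ →^σ τ` on displays with `k` beads. -/
def JStep (e k : ℕ) (l τ : Ptn) : Prop :=
  l.numParts ≤ k ∧ τ.numParts ≤ k ∧
  ∃ (σ : Finset ℕ) (a b i : ℕ), 1 ≤ i ∧ a < b ∧
    a ∈ l.betaSet k ∧ i * e ≤ a ∧ a - i * e ∉ l.betaSet k ∧
    σ = insert (a - i * e) ((l.betaSet k).erase a) ∧
    i * e ≤ b ∧ b - i * e ∈ σ ∧ b ∉ σ ∧
    τ.betaSet k = insert b (σ.erase (b - i * e))

/-- `λ → τ`: `λ →^σ τ` for some `σ` (on some common number of beads). -/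
def JRel (e : ℕ) (l τ : Ptn) : Prop := ∃ k : ℕ, JStep e k l τ

/-- The Jantzen order `≤_J`: reflexive-transitive closure of `→`. -/
def JLE (e : ℕ) : Ptn → Ptn → Prop := Relation.ReflTransGen (JRel e)

/-- One upward bead move on a β-set. -/
def Step (e : ℕ) (B B' : Finset ℕ) : Prop :=
  ∃ b ∈ B, e ≤ b ∧ b - e ∉ B ∧ B' = insert (b - e) (B.erase b)

/-- No upward bead move is possible. -/
def Terminal (e : ℕ) (B : Finset ℕ) : Prop := ∀ b ∈ B, e ≤ b → b - e ∈ B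

/-- `B` is the β-set of `μ` with `r` beads. -/
def IsBetaOf (B : Finset ℕ) (r : ℕ) (μ : Ptn) : Prop :=
  μ.numParts ≤ r ∧ μ.betaSet r = B

/-- The number of beads of the display `B` on runner `i`. -/
def cnt (e : ℕ) (B : Finset ℕ) (i : ℕ) : ℕ := (B.filter fun x => x % e = i).card

/-- The set of rows of the display `B` occupied by beads on runner `i`. -/
def rowsOf (e : ℕ) (B : Finset ℕ) (i : ℕ) : Finset ℕ :=
  (B.filter fun x => x % e = i).image fun x => x / e

/-- `ν²`: the partition obtained by removing the first part. -/
def Ptn.tail (l : Ptn) : Ptn where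
  parts := fun i => if i = 0 then 0 else l.parts (i + 1)
  zero_at_zero := rfl
  antitone := by
    intro i j hi hij
    try dsimp only
    rw [if_neg (by omega : i ≠ 0), if_neg (by omega : j ≠ 0)]
    exact l.antitone (by omega) (by omega)
  eventually_zero := by
    obtain ⟨N, hN⟩ := l.eventually_zero
    refine ⟨N + 1, fun i hi => ?_⟩
    try dsimp only
    rw [if_neg (by omega : i ≠ 0)]
    exact hN _ (by omega)


section Helpers

lemma mem_runnerBeta {e : ℕ} (rows : ℕ → Finset ℕ) {k : ℕ} (hk : k < e) (x : ℕ) :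
    x * e + k ∈ runnerBeta e rows ↔ x ∈ rows k := by
  unfold runnerBeta
  simp only [Finset.mem_biUnion, Finset.mem_image, Finset.mem_range]
  constructor
  · rintro ⟨k', hk', y, hy, heq⟩
    have h1 : (y * e + k') % e = k' := by
      rw [mul_comm, Nat.mul_add_mod, Nat.mod_eq_of_lt hk']
    have h2 : (x * e + k) % e = k := by
      rw [mul_comm, Nat.mul_add_mod, Nat.mod_eq_of_lt hk]
    rw [heq, h2] at h1
    subst h1
    have hy' : y = x := by
      have hmul : y * e = x * e := by omega
      exact Nat.eq_of_mul_eq_mul_right (by omega) hmul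
    subst hy'; exact hy
  · intro hx; exact ⟨k, hk, x, hx, rfl⟩

lemma mem_runnerBeta' {e : ℕ} (rows : ℕ → Finset ℕ) (m : ℕ) :
    m ∈ runnerBeta e rows ↔ ∃ k, k < e ∧ ∃ y, y ∈ rows k ∧ y * e + k = m := by
  unfold runnerBeta
  simp only [Finset.mem_biUnion, Finset.mem_image, Finset.mem_range]

lemma signAt_none_of_big {e k : ℕ} (he : 0 < e) (B : Finset ℕ) {x : ℕ}
    (hx : B.sup id / e < x) : signAt e k B x = none := by
  have hnot : ∀ c, x * e + c ∉ B := by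
    intro c hc
    have h1 : x * e + c ≤ B.sup id := Finset.le_sup (f := id) hc
    have h2 : B.sup id < (B.sup id / e + 1) * e :=
      (Nat.div_lt_iff_lt_mul he).mp (Nat.lt_succ_self _)
    have h3 : (B.sup id / e + 1) * e ≤ x * e :=
      Nat.mul_le_mul_right e (by omega)
    omega
  simp [signAt, hnot k, hnot (k - 1)]

lemma signature_extend {e k : ℕ} (he : 0 < e) (B : Finset ℕ)
    (hub : ∀ b ∈ B, b < 10 * e) :
    signature e k B = (List.range 10).filterMap (signAt e k B) := by
  have hN : B.sup id / e + 1 ≤ 10 := by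
    have hlt : B.sup id / e < 10 := by
      rw [Nat.div_lt_iff_lt_mul he]
      exact (Finset.sup_lt_iff (by positivity)).mpr hub
    omega
  obtain ⟨m, hm⟩ : ∃ m, 10 = (B.sup id / e + 1) + m := ⟨10 - (B.sup id / e + 1), by omega⟩
  have hnil : ((List.range m).map (fun t => (B.sup id / e + 1) + t)).filterMap (signAt e k B) = [] := by
    rw [List.filterMap_eq_nil_iff]
    intro a ha
    simp only [List.mem_map, List.mem_range] at ha
    obtain ⟨t, _, rfl⟩ := ha
    exact signAt_none_of_big he B (by omega)
  unfold signature
  conv_rhs => rw [hm, List.range_add, List.filterMap_append]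
  rw [hnil, List.append_nil]

lemma normalCount_runnerBeta {e k : ℕ} (rows : ℕ → Finset ℕ)
    (hrows : ∀ k' y, y ∈ rows k' → y < 10)
    (hk1 : 1 ≤ k) (hk : k < e) (Rk Rk1 : Finset ℕ)
    (h1 : rows k = Rk) (h2 : rows (k - 1) = Rk1) :
    normalCount e k (runnerBeta e rows) =
      (reduceSig ((List.range 10).filterMap fun x =>
        if x ∈ Rk ∧ x ∉ Rk1 then some false
        else if x ∈ Rk1 ∧ x ∉ Rk then some true
        else none)).count false := by
  have he : 0 < e := by omega
  have hub : ∀ b ∈ runnerBeta e rows, b < 10 * e := by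
    intro b hb
    rw [mem_runnerBeta'] at hb
    obtain ⟨k', hk', y, hy, rfl⟩ := hb
    have hy10 : y < 10 := hrows k' y hy
    have hmul : (y + 1) * e ≤ 10 * e := Nat.mul_le_mul_right e (by omega)
    have : (y + 1) * e = y * e + e := by ring
    omega
  have hfun : signAt e k (runnerBeta e rows) = fun x =>
      if x ∈ Rk ∧ x ∉ Rk1 then some false
      else if x ∈ Rk1 ∧ x ∉ Rk then some true
      else none := by
    funext x
    unfold signAt
    simp only [mem_runnerBeta rows hk x, mem_runnerBeta rows (show k - 1 < e by omega) x, h1, h2]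
  unfold normalCount
  rw [signature_extend he _ hub, hfun]

lemma parts_eq_zero_of_lt (l : Ptn) {i : ℕ} (h : l.numParts < i) : l.parts i = 0 := by
  have hne : {N : ℕ | ∀ j : ℕ, N < j → l.parts j = 0}.Nonempty := by
    obtain ⟨N, hN⟩ := l.eventually_zero
    exact ⟨N, fun j hj => hN j hj.le⟩
  have hmem := Nat.sInf_mem hne
  exact hmem i h

lemma betaSet_succ (l : Ptn) (r : ℕ) (h : l.numParts ≤ r) :
    l.betaSet (r + 1) = insert 0 ((l.betaSet r).image (· + 1)) := by
  have hz : l.parts (r + 1) = 0 := parts_eq_zero_of_lt l (by omega)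
  unfold Ptn.betaSet
  have hIcc : Finset.Icc 1 (r + 1) = insert (r + 1) (Finset.Icc 1 r) := by
    ext x; simp only [Finset.mem_Icc, Finset.mem_insert]; omega
  rw [hIcc, Finset.image_insert, Finset.image_image]
  congr 1
  · rw [hz]; simp
  · apply Finset.image_congr
    intro x hx
    simp only [Finset.mem_coe, Finset.mem_Icc] at hx
    simp only [Function.comp]
    omega

lemma runnerBeta_shift (e : ℕ) (he : 1 ≤ e) (rows : ℕ → Finset ℕ) :
    insert 0 ((runnerBeta e rows).image (· + 1)) =
      runnerBeta e (fun k => if k = 0 then insert 0 ((rows (e - 1)).image (· + 1)) else rows (k - 1)) := by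
  ext m
  simp only [Finset.mem_insert, Finset.mem_image, mem_runnerBeta']
  constructor
  · rintro (rfl | ⟨b, hb, rfl⟩)
    · refine ⟨0, by omega, 0, by simp, by simp⟩
    · obtain ⟨k, hk, y, hy, rfl⟩ := hb
      by_cases hke : k + 1 = e
      · refine ⟨0, by omega, y + 1, ?_, ?_⟩
        · rw [if_pos rfl]
          simp only [Finset.mem_insert, Finset.mem_image]
          exact Or.inr ⟨y, by rw [show e - 1 = k by omega]; exact hy, rfl⟩
        · have : (y + 1) * e = y * e + e := by ring
          omega
      · refine ⟨k + 1, by omega, y, ?_, by omega⟩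
        rw [if_neg (by omega : ¬(k + 1 = 0))]
        simpa using hy
  · rintro ⟨k, hk, y, hy, rfl⟩
    by_cases hk0 : k = 0
    · subst hk0
      rw [if_pos rfl] at hy
      simp only [Finset.mem_insert, Finset.mem_image] at hy
      rcases hy with rfl | ⟨z, hz, rfl⟩
      · left; simp
      · right
        refine ⟨z * e + (e - 1), ⟨e - 1, by omega, z, hz, rfl⟩, ?_⟩
        have : (z + 1) * e = z * e + e := by ring
        omega
    · rw [if_neg hk0] at hy
      right
      exact ⟨y * e + (k - 1), ⟨k - 1, by omega, y, hy, rfl⟩, by omega⟩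

end Helpers

lemma normalCount_shifted {e : ℕ} (he : 3 ≤ e) (rows : ℕ → Finset ℕ)
    (hrows : ∀ k' y, y ∈ rows k' → y < 9)
    (R0 Re : Finset ℕ) (h0 : rows 0 = R0) (hE : rows (e - 1) = Re) :
    normalCount e 1 (insert 0 ((runnerBeta e rows).image (· + 1))) =
      (reduceSig ((List.range 10).filterMap fun x =>
        if x ∈ R0 ∧ x ∉ insert 0 (Re.image (· + 1)) then some false
        else if x ∈ insert 0 (Re.image (· + 1)) ∧ x ∉ R0 then some true
        else none)).count false := by
  rw [runnerBeta_shift e (by omega) rows]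
  refine normalCount_runnerBeta _ ?_ (le_refl 1) (by omega) R0 (insert 0 (Re.image (· + 1))) ?_ ?_
  · intro k' y hy
    split at hy
    · simp only [Finset.mem_insert, Finset.mem_image] at hy
      rcases hy with rfl | ⟨z, hz, rfl⟩
      · omega
      · have := hrows _ _ hz; omega
    · have := hrows _ _ hy; omega
  · simp [h0]
  · simp [hE]

/-- for `e ≥ 3` and `λ` of one of the forms `⟨i_{3,2}⟩`, `⟨i_{2²}, j⟩`,
`⟨j, i_{2²}⟩`, runner `i` is the unique runner `k ∈ {1,…,e-1}` whose reduced `k`-signature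
(with `5e` beads) has at least two `−` signs, and with `5e+1` beads the reduced
`1`-signature has at most one `−` sign. -/
theorem statement1 (e : ℕ) (he : 3 ≤ e) (l : Ptn)
    (hsize : l.size = 5 * e) (hparts : l.numParts ≤ 5 * e) (i : ℕ)
    (hshape :
      (1 ≤ i ∧ i ≤ e - 1 ∧ l.betaSet (5 * e) = shape32 e i) ∨
      (∃ j : ℕ, 1 ≤ i ∧ i < j ∧ j ≤ e - 1 ∧ l.betaSet (5 * e) = shapeA e i j) ∨
      (∃ j : ℕ, j + 2 ≤ i ∧ i ≤ e - 1 ∧ l.betaSet (5 * e) = shapeB e j i)) :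
    (∀ k : ℕ, 1 ≤ k → k ≤ e - 1 →
        (2 ≤ normalCount e k (l.betaSet (5 * e)) ↔ k = i)) ∧
      normalCount e 1 (l.betaSet (5 * e + 1)) ≤ 1 := by
  have hβ' := betaSet_succ l (5 * e) hparts
  rcases hshape with ⟨hi1, hi2, hβ⟩ | ⟨j, hi1, hij, hj2, hβ⟩ | ⟨j, hji, hi2, hβ⟩
  · -- shape ⟨i_{3,2}⟩
    simp only [shape32] at hβ
    rw [hβ] at hβ'
    have hrows : ∀ k' y, y ∈ (fun k => if k = i then rows32 else rowsEmpty) k' → y < 9 := by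
      intro k' y hy
      simp only at hy
      split at hy <;> simp [rows32, rowsEmpty] at hy <;> omega
    have hrows10 : ∀ k' y, y ∈ (fun k => if k = i then rows32 else rowsEmpty) k' → y < 10 :=
      fun k' y hy => by have := hrows k' y hy; omega
    constructor
    · intro k hk1 hk2
      rw [hβ]
      have hke : k < e := by omega
      by_cases hki : k = i
      · refine iff_of_true ?_ hki
        rw [normalCount_runnerBeta (fun k => if k = i then rows32 else rowsEmpty) hrows10 hk1 hke
          rows32 rowsEmpty (by simp [hki]) (by simp [show ¬(k - 1 = i) by omega])]
        decide
      · refine iff_of_false ?_ hki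
        by_cases hki1 : k = i + 1
        · rw [normalCount_runnerBeta (fun k => if k = i then rows32 else rowsEmpty) hrows10 hk1 hke
            rowsEmpty rows32 (by simp [hki]) (by simp [show k - 1 = i by omega])]
          decide
        · rw [normalCount_runnerBeta (fun k => if k = i then rows32 else rowsEmpty) hrows10 hk1 hke
            rowsEmpty rowsEmpty (by simp [hki]) (by simp [show ¬(k - 1 = i) by omega])]
          decide
    · rw [hβ']
      by_cases hie : e - 1 = i
      · rw [normalCount_shifted he _ hrows rowsEmpty rows32
          (by simp [show ¬((0:ℕ) = i) by omega]) (by simp [hie])]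
        decide
      · rw [normalCount_shifted he _ hrows rowsEmpty rowsEmpty
          (by simp [show ¬((0:ℕ) = i) by omega]) (by simp [hie])]
        decide
  · -- shape ⟨i_{2²}, j⟩
    simp only [shapeA] at hβ
    rw [hβ] at hβ'
    have hrows : ∀ k' y,
        y ∈ (fun k => if k = i then rows22 else if k = j then rows1 else rowsEmpty) k' → y < 9 := by
      intro k' y hy
      simp only at hy
      split at hy
      · simp [rows22] at hy; omega
      · split at hy <;> simp [rows1, rowsEmpty] at hy <;> omega
    have hrows10 : ∀ k' y,
        y ∈ (fun k => if k = i then rows22 else if k = j then rows1 else rowsEmpty) k' → y < 10 :=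
      fun k' y hy => by have := hrows k' y hy; omega
    constructor
    · intro k hk1 hk2
      rw [hβ]
      have hke : k < e := by omega
      by_cases hki : k = i
      · refine iff_of_true ?_ hki
        rw [normalCount_runnerBeta (fun k => if k = i then rows22 else if k = j then rows1 else rowsEmpty)
          hrows10 hk1 hke rows22 rowsEmpty (by simp [hki])
          (by simp [show ¬(k - 1 = i) by omega, show ¬(k - 1 = j) by omega])]
        decide
      · refine iff_of_false ?_ hki
        by_cases hkj : k = j
        · by_cases hji1 : j = i + 1
          · rw [normalCount_runnerBeta (fun k => if k = i then rows22 else if k = j then rows1 else rowsEmpty)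
              hrows10 hk1 hke rows1 rows22 (by simp [hkj, show ¬(j = i) by omega])
              (by simp [show k - 1 = i by omega])]
            decide
          · rw [normalCount_runnerBeta (fun k => if k = i then rows22 else if k = j then rows1 else rowsEmpty)
              hrows10 hk1 hke rows1 rowsEmpty (by simp [hkj, show ¬(j = i) by omega])
              (by simp [show ¬(k - 1 = i) by omega, show ¬(k - 1 = j) by omega])]
            decide
        · by_cases hki1 : k = i + 1
          · rw [normalCount_runnerBeta (fun k => if k = i then rows22 else if k = j then rows1 else rowsEmpty)
              hrows10 hk1 hke rowsEmpty rows22 (by simp [hki, hkj])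
              (by simp [show k - 1 = i by omega])]
            decide
          · by_cases hkj1 : k = j + 1
            · rw [normalCount_runnerBeta (fun k => if k = i then rows22 else if k = j then rows1 else rowsEmpty)
                hrows10 hk1 hke rowsEmpty rows1 (by simp [hki, hkj])
                (by simp [show k - 1 = j by omega, show ¬(j = i) by omega])]
              decide
            · rw [normalCount_runnerBeta (fun k => if k = i then rows22 else if k = j then rows1 else rowsEmpty)
                hrows10 hk1 hke rowsEmpty rowsEmpty (by simp [hki, hkj])
                (by simp [show ¬(k - 1 = i) by omega, show ¬(k - 1 = j) by omega])]
              decide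
    · rw [hβ']
      by_cases hje : e - 1 = j
      · rw [normalCount_shifted he _ hrows rowsEmpty rows1
          (by simp [show ¬((0:ℕ) = i) by omega, show ¬((0:ℕ) = j) by omega])
          (by simp [hje, show ¬(j = i) by omega])]
        decide
      · rw [normalCount_shifted he _ hrows rowsEmpty rowsEmpty
          (by simp [show ¬((0:ℕ) = i) by omega, show ¬((0:ℕ) = j) by omega])
          (by simp [show ¬(e - 1 = i) by omega, hje])]
        decide
  · -- shape ⟨j, i_{2²}⟩
    simp only [shapeB] at hβ
    rw [hβ] at hβ'
    have hrows : ∀ k' y,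
        y ∈ (fun k => if k = j then rows1 else if k = i then rows22 else rowsEmpty) k' → y < 9 := by
      intro k' y hy
      simp only at hy
      split at hy
      · simp [rows1] at hy; omega
      · split at hy <;> simp [rows22, rowsEmpty] at hy <;> omega
    have hrows10 : ∀ k' y,
        y ∈ (fun k => if k = j then rows1 else if k = i then rows22 else rowsEmpty) k' → y < 10 :=
      fun k' y hy => by have := hrows k' y hy; omega
    constructor
    · intro k hk1 hk2
      rw [hβ]
      have hke : k < e := by omega
      by_cases hki : k = i
      · refine iff_of_true ?_ hki
        rw [normalCount_runnerBeta (fun k => if k = j then rows1 else if k = i then rows22 else rowsEmpty)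
          hrows10 hk1 hke rows22 rowsEmpty (by simp [hki, show ¬(i = j) by omega])
          (by simp [show ¬(k - 1 = j) by omega, show ¬(k - 1 = i) by omega])]
        decide
      · refine iff_of_false ?_ hki
        by_cases hkj : k = j
        · rw [normalCount_runnerBeta (fun k => if k = j then rows1 else if k = i then rows22 else rowsEmpty)
            hrows10 hk1 hke rows1 rowsEmpty (by simp [hkj])
            (by simp [show ¬(k - 1 = j) by omega, show ¬(k - 1 = i) by omega])]
          decide
        · by_cases hkj1 : k = j + 1
          · rw [normalCount_runnerBeta (fun k => if k = j then rows1 else if k = i then rows22 else rowsEmpty)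
              hrows10 hk1 hke rowsEmpty rows1 (by simp [hkj, hki])
              (by simp [show k - 1 = j by omega])]
            decide
          · by_cases hki1 : k = i + 1
            · rw [normalCount_runnerBeta (fun k => if k = j then rows1 else if k = i then rows22 else rowsEmpty)
                hrows10 hk1 hke rowsEmpty rows22 (by simp [hkj, hki])
                (by simp [show k - 1 = i by omega, show ¬(i = j) by omega])]
              decide
            · rw [normalCount_runnerBeta (fun k => if k = j then rows1 else if k = i then rows22 else rowsEmpty)
                hrows10 hk1 hke rowsEmpty rowsEmpty (by simp [hkj, hki])
                (by simp [show ¬(k - 1 = j) by omega, show ¬(k - 1 = i) by omega])]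
              decide
    · rw [hβ']
      by_cases hj0 : j = 0
      · by_cases hie : e - 1 = i
        · rw [normalCount_shifted he _ hrows rows1 rows22
            (by simp [hj0]) (by simp [hie, show ¬(i = j) by omega])]
          decide
        · rw [normalCount_shifted he _ hrows rows1 rowsEmpty
            (by simp [hj0]) (by simp [show ¬(e - 1 = j) by omega, hie])]
          decide
      · by_cases hie : e - 1 = i
        · rw [normalCount_shifted he _ hrows rowsEmpty rows22
            (by simp [show ¬((0:ℕ) = j) by omega, show ¬((0:ℕ) = i) by omega])
            (by simp [hie, show ¬(i = j) by omega])]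
          decide
        · rw [normalCount_shifted he _ hrows rowsEmpty rowsEmpty
            (by simp [show ¬((0:ℕ) = j) by omega, show ¬((0:ℕ) = i) by omega])
            (by simp [show ¬(e - 1 = j) by omega, hie])]
          decide
end

section
/- Fix e ≥ 2 and suppose λ →^σ τ for partitions λ, σ, τ displayed on an abacus with a common number k of beads; that is, the display of σ is obtained from that of λ by moving a bead from a position a to the vacant position a − ie for some i ≥ 1, and the display of τ is obtained from that of σ by moving a bead from a position b − ie to the vacant position b, where a < b. Then λ and τ are partitions of the same integer n, they have the same e-core and the same e-weight, and τ strictly dominates λ in the dominance order. Consequently, the Jantzen order ≤_J is a partial order on partitions of n which is extended by the dominance order. -/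
section Aux

lemma Ptn.parts_eq_zero (l : Ptn) {i : ℕ} (hi : l.numParts < i) : l.parts i = 0 := by
  have hne : {N : ℕ | ∀ i : ℕ, N < i → l.parts i = 0}.Nonempty := by
    obtain ⟨N, hN⟩ := l.eventually_zero
    exact ⟨N, fun i hi => hN i hi.le⟩
  exact Nat.sInf_mem hne i hi

lemma Ptn.beta_strict (l : Ptn) {r i j : ℕ} (h1 : 1 ≤ i) (hij : i < j) (hj : j ≤ r) :
    l.parts j + r - j < l.parts i + r - i := by
  have h := l.antitone h1 hij.le
  omega

lemma Ptn.beta_inj (l : Ptn) (r : ℕ) : ∀ i ∈ Finset.Icc 1 r, ∀ j ∈ Finset.Icc 1 r,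
    l.parts i + r - i = l.parts j + r - j → i = j := by
  intro i hi j hj hij
  simp only [Finset.mem_Icc] at hi hj
  by_contra hne
  rcases Nat.lt_or_ge i j with h | h
  · have := l.beta_strict hi.1 h hj.2; omega
  · have hlt : j < i := by omega
    have := l.beta_strict hj.1 hlt hi.2; omega

lemma Ptn.beta_sum_g (l : Ptn) (r : ℕ) (g : ℕ → ℕ) :
    ∑ b ∈ l.betaSet r, g b = ∑ i ∈ Finset.Icc 1 r, g (l.parts i + r - i) :=
  Finset.sum_image (l.beta_inj r)

lemma Ptn.size_eq_sum (l : Ptn) {r : ℕ} (h : l.numParts ≤ r) :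
    l.size = ∑ i ∈ Finset.Icc 1 r, l.parts i := by
  refine Finset.sum_subset (Finset.Icc_subset_Icc_right h) fun i hi hni => ?_
  simp only [Finset.mem_Icc] at hi hni
  exact l.parts_eq_zero (by omega)

lemma Ptn.beta_sum (l : Ptn) {r : ℕ} (h : l.numParts ≤ r) :
    ∑ b ∈ l.betaSet r, b = l.size + ∑ i ∈ Finset.Icc 1 r, (r - i) := by
  rw [show (∑ b ∈ l.betaSet r, b) = ∑ b ∈ l.betaSet r, id b from rfl, l.beta_sum_g r id,
    l.size_eq_sum h, ← Finset.sum_add_distrib]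
  refine Finset.sum_congr rfl fun i hi => ?_
  simp only [Finset.mem_Icc] at hi
  simp only [id]
  omega

lemma cnt_eq_sum (e : ℕ) (B : Finset ℕ) (j : ℕ) :
    cnt e B j = ∑ x ∈ B, (if x % e = j then 1 else 0) := by
  rw [cnt, Finset.card_filter]

lemma coreBeta_congr (e : ℕ) {B B' : Finset ℕ} (h : ∀ j < e, cnt e B j = cnt e B' j) :
    coreBeta e B = coreBeta e B' := by
  unfold coreBeta
  refine Finset.biUnion_congr rfl fun k hk => ?_
  rw [Finset.mem_range] at hk
  rw [show (B.filter fun x => x % e = k).card = cnt e B k from rfl, h k hk]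
  rfl

lemma swap_sum {B : Finset ℕ} {a y : ℕ} (ha : a ∈ B) (hy : y ∉ B) (g : ℕ → ℕ) :
    ∑ x ∈ insert y (B.erase a), g x + g a = ∑ x ∈ B, g x + g y := by
  rw [Finset.sum_insert (fun h => hy (Finset.mem_of_mem_erase h)),
    ← Finset.sum_erase_add B g ha]
  ring

lemma Ptn.beta_succ (l : Ptn) {r : ℕ} (h : l.numParts ≤ r) :
    l.betaSet (r + 1) = insert 0 ((l.betaSet r).image (· + 1)) := by
  ext x
  simp only [Ptn.betaSet, Finset.mem_insert, Finset.mem_image, Finset.mem_Icc]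
  constructor
  · rintro ⟨i, ⟨h1, h2⟩, rfl⟩
    rcases Nat.lt_or_ge i (r + 1) with hlt | hge
    · right
      exact ⟨l.parts i + r - i, ⟨i, ⟨h1, by omega⟩, rfl⟩, by omega⟩
    · left
      have hir : i = r + 1 := by omega
      subst hir
      rw [l.parts_eq_zero (by omega)]
      omega
  · rintro (rfl | ⟨y, ⟨i, ⟨h1, h2⟩, rfl⟩, rfl⟩)
    · exact ⟨r + 1, ⟨by omega, le_refl _⟩, by rw [l.parts_eq_zero (by omega)]; omega⟩
    · exact ⟨i, ⟨h1, by omega⟩, by omega⟩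

lemma succ_mod_eq_iff (e j : ℕ) (he : 2 ≤ e) (hj : j < e) (x : ℕ) :
    (x + 1) % e = j ↔ x % e = (j + e - 1) % e := by
  have hq : x % e < e := Nat.mod_lt _ (by omega)
  have h1 : (x + 1) % e = (x % e + 1) % e := (Nat.mod_add_mod x e 1).symm
  have hpred : (j + e - 1) % e = if j = 0 then e - 1 else j - 1 := by
    rcases Nat.eq_zero_or_pos j with rfl | hp
    · simp only [if_pos rfl, Nat.zero_add]
      exact Nat.mod_eq_of_lt (by omega)
    · rw [if_neg (by omega), show j + e - 1 = (j - 1) + e by omega, Nat.add_mod_right]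
      exact Nat.mod_eq_of_lt (by omega)
  rw [h1, hpred]
  rcases Nat.lt_or_ge (x % e + 1) e with h | h
  · rw [Nat.mod_eq_of_lt h]
    split <;> omega
  · have hx : x % e + 1 = e := by omega
    rw [hx, Nat.mod_self]
    split <;> omega

lemma cnt_shift (e : ℕ) (he : 2 ≤ e) (B : Finset ℕ) (j : ℕ) (hj : j < e) :
    cnt e (insert 0 (B.image (· + 1))) j
      = cnt e B ((j + e - 1) % e) + (if j = 0 then 1 else 0) := by
  have hinj : Function.Injective (· + 1 : ℕ → ℕ) := fun a b hab => by simpa using hab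
  have himg : (Finset.filter (fun x => x % e = j) (B.image (· + 1))).card
      = cnt e B ((j + e - 1) % e) := by
    rw [Finset.filter_image, Finset.card_image_of_injective _ hinj]
    unfold cnt
    congr 1
    refine Finset.filter_congr fun x _ => ?_
    simpa using succ_mod_eq_iff e j he hj x
  unfold cnt
  rw [Finset.filter_insert]
  rcases eq_or_ne j 0 with rfl | hne
  · rw [if_pos (Nat.zero_mod e), if_pos rfl,
      Finset.card_insert_of_notMem (by simp)]
    unfold cnt at himg
    omega
  · rw [if_neg (fun h => hne (by rw [Nat.zero_mod] at h; exact h.symm)), if_neg hne]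
    unfold cnt at himg
    omega

lemma dom_refl (l : Ptn) : Dom l l := fun _ => le_refl _

lemma dom_trans {a b c : Ptn} (h1 : Dom a b) (h2 : Dom b c) : Dom a c :=
  fun t => (h1 t).trans (h2 t)

lemma dom_antisymm (l m : Ptn) (h1 : Dom l m) (h2 : Dom m l) : l = m := by
  have hs : ∀ t, ∑ i ∈ Finset.Icc 1 t, l.parts i = ∑ i ∈ Finset.Icc 1 t, m.parts i :=
    fun t => le_antisymm (h1 t) (h2 t)
  have hp : ∀ i, l.parts i = m.parts i := by
    intro i
    cases i with
    | zero => rw [l.zero_at_zero, m.zero_at_zero]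
    | succ j =>
      have ha := hs j
      have hb := hs (j + 1)
      rw [Finset.sum_Icc_succ_top (by omega), Finset.sum_Icc_succ_top (by omega)] at hb
      omega
  cases l; cases m
  simp only [Ptn.mk.injEq]
  exact funext hp

lemma dom_of_beta (l τ : Ptn) (k : ℕ) (hl : l.numParts ≤ k) (ht : τ.numParts ≤ k)
    (hsize : l.size = τ.size)
    (hmaj : ∀ x, ∑ p ∈ l.betaSet k, (p - x) ≤ ∑ p ∈ τ.betaSet k, (p - x)) : Dom l τ := by
  intro t
  rcases Nat.eq_zero_or_pos t with rfl | ht1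
  · simp
  rcases Nat.lt_or_ge t k with htk | htk
  · set x := τ.parts t + (k - t) with hx
    have hcard : (Finset.Icc 1 t).card = t := by rw [Nat.card_Icc]; omega
    have key1 : ∑ i ∈ Finset.Icc 1 t, (l.parts i + (k - i)) ≤
        (∑ p ∈ l.betaSet k, (p - x)) + t * x := by
      calc ∑ i ∈ Finset.Icc 1 t, (l.parts i + (k - i))
          ≤ ∑ i ∈ Finset.Icc 1 t, ((l.parts i + k - i - x) + x) :=
            Finset.sum_le_sum (fun i hi => by
              simp only [Finset.mem_Icc] at hi; omega)
        _ = (∑ i ∈ Finset.Icc 1 t, (l.parts i + k - i - x)) + t * x := by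
            rw [Finset.sum_add_distrib, Finset.sum_const, hcard, smul_eq_mul]
        _ ≤ (∑ i ∈ Finset.Icc 1 k, (l.parts i + k - i - x)) + t * x := by
            exact Nat.add_le_add_right
              (Finset.sum_le_sum_of_subset (Finset.Icc_subset_Icc_right htk.le)) _
        _ = (∑ p ∈ l.betaSet k, (p - x)) + t * x := by
            rw [l.beta_sum_g k (· - x)]
    have key2 : (∑ p ∈ τ.betaSet k, (p - x)) + t * x =
        ∑ i ∈ Finset.Icc 1 t, (τ.parts i + (k - i)) := by
      have e1 : ∑ p ∈ τ.betaSet k, (p - x) = ∑ i ∈ Finset.Icc 1 t, (τ.parts i + k - i - x) := by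
        rw [τ.beta_sum_g k (· - x)]
        refine (Finset.sum_subset (Finset.Icc_subset_Icc_right (by omega))
          fun i hi hni => ?_).symm
        simp only [Finset.mem_Icc] at hi hni
        have hlt : τ.parts i + k - i < τ.parts t + k - t :=
          τ.beta_strict ht1 (by omega) hi.2
        omega
      have e2 : ∑ i ∈ Finset.Icc 1 t, ((τ.parts i + k - i - x) + x) =
          (∑ i ∈ Finset.Icc 1 t, (τ.parts i + k - i - x)) + t * x := by
        rw [Finset.sum_add_distrib, Finset.sum_const, hcard, smul_eq_mul]
      rw [e1, ← e2]
      refine Finset.sum_congr rfl fun i hi => ?_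
      simp only [Finset.mem_Icc] at hi
      rcases Nat.lt_or_ge i t with hit | hit
      · have hge : τ.parts t + k - t < τ.parts i + k - i :=
          τ.beta_strict hi.1 hit (by omega)
        omega
      · have hit' : i = t := by omega
        subst hit'
        omega
    have h3 := hmaj x
    have h4 : ∑ i ∈ Finset.Icc 1 t, (l.parts i + (k - i)) ≤
        ∑ i ∈ Finset.Icc 1 t, (τ.parts i + (k - i)) := by omega
    rw [Finset.sum_add_distrib, Finset.sum_add_distrib] at h4
    omega
  · rw [← l.size_eq_sum (le_trans hl htk), ← τ.size_eq_sum (le_trans ht htk), hsize]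

lemma jstep_main (e : ℕ) (he : 2 ≤ e) (k : ℕ) (l τ : Ptn) (h : JStep e k l τ) :
    l.size = τ.size ∧ SameCore e l τ ∧
    eWeight e (l.betaSet k) = eWeight e (τ.betaSet k) ∧
    Dom l τ ∧ l ≠ τ := by
  obtain ⟨hlk, htk, σ, a, b, i, hi1, hab, haB, hiea, hiaB, hσ, hieb, hbmσ, hbσ, hT⟩ := h
  subst hσ
  have hme : e ≤ i * e := Nat.le_mul_of_pos_left e (by omega)
  have key : ∀ g : ℕ → ℕ, (∑ x ∈ τ.betaSet k, g x) + (g (b - i * e) + g a)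
      = (∑ x ∈ l.betaSet k, g x) + (g b + g (a - i * e)) := by
    intro g
    have s1 := swap_sum haB hiaB g
    have s2 := swap_sum hbmσ hbσ g
    rw [hT]
    omega
  have hsum : ∑ x ∈ τ.betaSet k, x = ∑ x ∈ l.betaSet k, x := by
    have hk := key id
    simp only [id] at hk
    omega
  have hsize : l.size = τ.size := by
    have hs1 := l.beta_sum hlk
    have hs2 := τ.beta_sum htk
    omega
  have hcnt : ∀ j, cnt e (l.betaSet k) j = cnt e (τ.betaSet k) j := by
    intro j
    have hk := key (fun x => if x % e = j then 1 else 0)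
    have hmoda : (a - i * e) % e = a % e := by
      conv_rhs => rw [show a = (a - i * e) + i * e by omega]
      rw [Nat.add_mul_mod_self_right]
    have hmodb : (b - i * e) % e = b % e := by
      conv_rhs => rw [show b = (b - i * e) + i * e by omega]
      rw [Nat.add_mul_mod_self_right]
    rw [hmoda, hmodb] at hk
    rw [cnt_eq_sum, cnt_eq_sum]
    omega
  have hmaj : ∀ x, ∑ p ∈ l.betaSet k, (p - x) ≤ ∑ p ∈ τ.betaSet k, (p - x) := by
    intro x
    have hk := key (· - x)
    omega
  have haT : a ∉ τ.betaSet k := by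
    rw [hT]
    intro hmem
    rcases Finset.mem_insert.mp hmem with h | h
    · omega
    · have h2 := Finset.mem_of_mem_erase h
      rcases Finset.mem_insert.mp h2 with h3 | h3
      · omega
      · exact absurd h3 (Finset.notMem_erase a _)
  have hneq : l ≠ τ := by
    intro hlτ
    rw [hlτ] at haB
    exact haT haB
  have hcore : coreBeta e (l.betaSet k) = coreBeta e (τ.betaSet k) :=
    coreBeta_congr e (fun j _ => hcnt j)
  have hweight : eWeight e (l.betaSet k) = eWeight e (τ.betaSet k) := by
    unfold eWeight
    rw [hsum, hcore]
  -- SameCore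
  have hQstep : ∀ r, l.numParts ≤ r → τ.numParts ≤ r →
      ((∀ j < e, cnt e (l.betaSet (r + 1)) j = cnt e (τ.betaSet (r + 1)) j) ↔
       (∀ j < e, cnt e (l.betaSet r) j = cnt e (τ.betaSet r) j)) := by
    intro r h1 h2
    rw [l.beta_succ h1, τ.beta_succ h2]
    constructor
    · intro H j hj
      have h3 := H ((j + 1) % e) (Nat.mod_lt _ (by omega))
      rw [cnt_shift e he _ _ (Nat.mod_lt _ (by omega)),
        cnt_shift e he _ _ (Nat.mod_lt _ (by omega))] at h3
      have h4 : ((j + 1) % e + e - 1) % e = j := by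
        rcases Nat.lt_or_ge (j + 1) e with hlt | hge
        · rw [Nat.mod_eq_of_lt hlt, show j + 1 + e - 1 = j + e by omega,
            Nat.add_mod_right]
          exact Nat.mod_eq_of_lt hj
        · have hje : j + 1 = e := by omega
          rw [hje, Nat.mod_self, Nat.zero_add]
          rw [Nat.mod_eq_of_lt (by omega)]
          omega
      rw [h4] at h3
      omega
    · intro H j hj
      rw [cnt_shift e he _ _ hj, cnt_shift e he _ _ hj]
      have h3 := H ((j + e - 1) % e) (Nat.mod_lt _ (by omega))
      omega
  have hQ : ∀ r, l.numParts ≤ r → τ.numParts ≤ r →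
      ∀ j < e, cnt e (l.betaSet r) j = cnt e (τ.betaSet r) j := by
    set m0 := max l.numParts τ.numParts with hm0
    have hbase : ∀ d, ((∀ j < e, cnt e (l.betaSet (m0 + d)) j = cnt e (τ.betaSet (m0 + d)) j) ↔
        (∀ j < e, cnt e (l.betaSet m0) j = cnt e (τ.betaSet m0) j)) := by
      intro d
      induction d with
      | zero => rfl
      | succ d ih =>
        rw [← Nat.add_assoc]
        exact (hQstep (m0 + d) (le_trans (le_max_left _ _) (Nat.le_add_right _ _))
          (le_trans (le_max_right _ _) (Nat.le_add_right _ _))).trans ih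
    have hm0k : m0 ≤ k := max_le hlk htk
    have hQm0 : ∀ j < e, cnt e (l.betaSet m0) j = cnt e (τ.betaSet m0) j := by
      have hb := hbase (k - m0)
      rw [show m0 + (k - m0) = k by omega] at hb
      exact hb.mp (fun j _ => hcnt j)
    intro r h1 h2
    have hb := hbase (r - m0)
    rw [show m0 + (r - m0) = r by omega] at hb
    · exact hb.mpr hQm0
  have hsc : SameCore e l τ := fun r h1 h2 => coreBeta_congr e (hQ r h1 h2)
  exact ⟨hsize, hsc, hweight, dom_of_beta l τ k hlk htk hsize hmaj, hneq⟩

end Aux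

/-- if `λ →^σ τ` then `λ` and `τ` are partitions of the same integer with the
same `e`-core and `e`-weight, and `τ` strictly dominates `λ`; consequently the Jantzen
order is a partial order on partitions of `n` extended by the dominance order. -/
theorem statement4 (e : ℕ) (he : 2 ≤ e) (n : ℕ) :
    (∀ (k : ℕ) (l τ : Ptn), JStep e k l τ →
        l.size = τ.size ∧ SameCore e l τ ∧
        eWeight e (l.betaSet k) = eWeight e (τ.betaSet k) ∧
        Dom l τ ∧ l ≠ τ) ∧
    (∀ l m : Ptn, l.size = n → m.size = n → JLE e l m → JLE e m l → l = m) ∧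
    (∀ l m : Ptn, l.size = n → m.size = n → JLE e l m → Dom l m) := by
  refine ⟨fun k l τ h => jstep_main e he k l τ h, ?_, ?_⟩
  · intro l m _ _ h1 h2
    have hdom : ∀ p q : Ptn, JLE e p q → Dom p q := by
      intro p q h
      induction h with
      | refl => exact dom_refl _
      | tail _ h2 ih =>
        obtain ⟨k, hk⟩ := h2
        exact dom_trans ih (jstep_main e he k _ _ hk).2.2.2.1
    exact dom_antisymm _ _ (hdom _ _ h1) (hdom _ _ h2)
  · intro l m hn1 hn2 h
    clear hn1 hn2
    induction h with
    | refl => exact dom_refl _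
    | tail _ h2 ih =>
      obtain ⟨k, hk⟩ := h2
      exact dom_trans ih (jstep_main e he k _ _ hk).2.2.2.1
end
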